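/- Let L be a finite lattice, I_L the join-meet ideal in K[L], J a poset ideal of L with a maximal element e, and set H = {a ∈ L : a ≱ e}. Then every element a of H satisfies a·e ∈ (I_L, J \ {e}); that is, H is contained in the degree-one part of the colon ideal (I_L, J \ {e}) : e. -/

import Mathlib

open MvPolynomial

/-- A poset ideal (order ideal) of a finite lattice. -/
def IsPosetIdeal {L : Type*} [Lattice L] (J : Set L) : Prop :=
  ∀ a b : L, a ≤ b → b ∈ J → a ∈ J

/-- The join-meet ideal of a finite lattice `L` in `K[L]`. -/
noncomputable def joinMeetIdeal (K : Type*) [Field K] (L : Type*) [Lattice L] :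
    Ideal (MvPolynomial L K) :=
  Ideal.span {p | ∃ a b : L, ¬ a ≤ b ∧ ¬ b ≤ a ∧
    p = X a * X b - X (a ⊔ b) * X (a ⊓ b)}

/-- The ideal `(I_L, T)` generated by the join-meet ideal together with the
variables in `T`. -/
noncomputable def joinMeetIdealWith (K : Type*) [Field K] (L : Type*) [Lattice L]
    (T : Set L) : Ideal (MvPolynomial L K) :=
  joinMeetIdeal K L ⊔ Ideal.span (X '' T)

theorem H_in_colon {K : Type*} [Field K] {L : Type*} [Lattice L] [Fintype L]
    (J : Set L) (hJ : IsPosetIdeal J) (e : L) (he : e ∈ J)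
    (hmax : ∀ b ∈ J, e ≤ b → b = e) :
    ∀ a ∈ {a : L | ¬ e ≤ a},
      (X a * X e : MvPolynomial L K) ∈ joinMeetIdealWith K L (J \ {e}) := by
  intro a ha
  simp only [Set.mem_setOf_eq] at ha
  by_cases hle : a ≤ e
  · -- a ∈ J \ {e}, so X a is a generator
    have haJ : a ∈ J := hJ a e hle he
    have hane : a ≠ e := fun h => ha (h ▸ le_refl e)
    have hXa : (X a : MvPolynomial L K) ∈ Ideal.span (X '' (J \ {e})) :=
      Ideal.subset_span ⟨a, ⟨haJ, hane⟩, rfl⟩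
    have : (X a * X e : MvPolynomial L K) ∈ Ideal.span (X '' (J \ {e})) := by
      rw [mul_comm]; exact Ideal.mul_mem_left _ _ hXa
    exact Ideal.mem_sup_right this
  · -- a and e incomparable
    have hgen : (X a * X e - X (a ⊔ e) * X (a ⊓ e) : MvPolynomial L K) ∈
        joinMeetIdeal K L :=
      Ideal.subset_span ⟨a, e, hle, ha, rfl⟩
    have hmeet : a ⊓ e ∈ J \ {e} := by
      refine ⟨hJ _ e inf_le_right he, ?_⟩
      intro h
      exact ha (le_of_eq (h : a ⊓ e = e).symm |>.trans inf_le_left)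
    have h2 : (X (a ⊔ e) * X (a ⊓ e) : MvPolynomial L K) ∈
        Ideal.span (X '' (J \ {e})) :=
      Ideal.mul_mem_left _ _ (Ideal.subset_span ⟨a ⊓ e, hmeet, rfl⟩)
    have := add_mem (Ideal.mem_sup_left hgen) (Ideal.mem_sup_right h2)
    simpa [joinMeetIdealWith] using this
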